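/- arXiv:0804.4503 — 2 statements merged into one kernel-verified Lean document; each statement's English description precedes it below -/
import Mathlib

section
/- Fix N ≥ 1 and β ≥ 0 with θ = tanh β. The quenched pressure A_N(α,β) = (1/N)·E[ln Z_N(α,β)] is differentiable in α > 1/2 and ∂A_N(α,β)/∂α = ln cosh β + E[(1/N²) Σ_{i,j∈Fin N} ln(1 + θ·ω(σ_iσ_j))] = ln cosh β − Σ_{m=1}^∞ ((−1)^m/m) θ^m ⟨q²_{1,…,m}⟩, where the series converges absolutely and ⟨q²_{1,…,m}⟩ = E[(1/N²) Σ_{i,j} (ω(σ_iσ_j))^m]. -/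
open scoped BigOperators

/-- The set of spin values `{-1, 1}` as a finite subset of `ℝ`. -/
noncomputable abbrev SpinVal : Finset ℝ := {-1, 1}

/-- Spin configurations on `n` sites: maps `Fin n → ℝ` taking values in `{-1,1}`. -/
abbrev Conf (n : ℕ) := Fin n → SpinVal

/-- Hamiltonian of the diluted ferromagnet for the disorder realization `(k, b)`:
`H(σ) = -Σ_{ν<k} σ_{(bν).1} σ_{(bν).2}`. -/
noncomputable def Hdil {n k : ℕ} (b : Fin k → Fin n × Fin n) (σ : Conf n) : ℝ :=
  - ∑ ν : Fin k, (σ (b ν).1 : ℝ) * (σ (b ν).2 : ℝ)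

/-- Partition function of the diluted ferromagnet at inverse temperature `β`. -/
noncomputable def Zdil (n : ℕ) (β : ℝ) {k : ℕ} (b : Fin k → Fin n × Fin n) : ℝ :=
  ∑ σ : Conf n, Real.exp (-β * Hdil b σ)

/-- Gibbs expectation `ω` of an observable for a fixed disorder realization. -/
noncomputable def gibbs (n : ℕ) (β : ℝ) {k : ℕ} (b : Fin k → Fin n × Fin n)
    (f : Conf n → ℝ) : ℝ :=
  (∑ σ : Conf n, f σ * Real.exp (-β * Hdil b σ)) / Zdil n β b

/-- The Poisson probability mass function with mean `lam`. -/
noncomputable def poissonPMF (lam : ℝ) (k : ℕ) : ℝ :=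
  Real.exp (-lam) * lam ^ k / (Nat.factorial k : ℝ)

/-- Quenched expectation at connectivity `α` on `n` sites: the number of bonds `k` is
Poisson(αn) and the `2k` endpoints are i.i.d. uniform on the `n` sites. -/
noncomputable def quenched (n : ℕ) (α : ℝ)
    (F : (k : ℕ) → (Fin k → Fin n × Fin n) → ℝ) : ℝ :=
  ∑' k : ℕ, poissonPMF (α * n) k *
    ((∑ b : Fin k → Fin n × Fin n, F k b) / ((n : ℝ) ^ 2) ^ k)

/-- Boltzmann weight of the `t`-perturbed (cavity) system with realization
`(k, b, k', l)`: `exp(β Σ_ν σσ + β Σ_μ σ_{l μ})`. -/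
noncomputable def cavWeight (n : ℕ) (β : ℝ) {k k' : ℕ} (b : Fin k → Fin n × Fin n)
    (l : Fin k' → Fin n) (σ : Conf n) : ℝ :=
  Real.exp (β * ∑ ν : Fin k, (σ (b ν).1 : ℝ) * (σ (b ν).2 : ℝ)
    + β * ∑ μ : Fin k', (σ (l μ) : ℝ))

/-- Partition function of the `t`-perturbed (cavity) system. -/
noncomputable def Zcav (n : ℕ) (β : ℝ) {k k' : ℕ} (b : Fin k → Fin n × Fin n)
    (l : Fin k' → Fin n) : ℝ :=
  ∑ σ : Conf n, cavWeight n β b l σ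

/-- Gibbs expectation `ω_t` of the `t`-perturbed (cavity) system at fixed realization. -/
noncomputable def gibbsCav (n : ℕ) (β : ℝ) {k k' : ℕ} (b : Fin k → Fin n × Fin n)
    (l : Fin k' → Fin n) (f : Conf n → ℝ) : ℝ :=
  (∑ σ : Conf n, f σ * cavWeight n β b l σ) / Zcav n β b l

/-- Quenched expectation `E_t` of the `t`-perturbed system at connectivity `αt`:
`k` is Poisson(αt·n), `k'` is Poisson(2·αt·t), and all indices are i.i.d. uniform. -/
noncomputable def quenchedCav (n : ℕ) (αt t : ℝ)
    (F : (k : ℕ) → (Fin k → Fin n × Fin n) → (k' : ℕ) → (Fin k' → Fin n) → ℝ) : ℝ :=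
  ∑' k : ℕ, ∑' k' : ℕ, poissonPMF (αt * n) k * poissonPMF (2 * αt * t) k' *
    ((∑ b : Fin k → Fin n × Fin n, ∑ l : Fin k' → Fin n, F k b k' l) /
      (((n : ℝ) ^ 2) ^ k * (n : ℝ) ^ k'))

/-- The cavity function `Ψ_n(α̃, β; t) = E_t[ln Z_{n,t}] - E[ln Z_n(α̃, β)]`. -/
noncomputable def Psi (n : ℕ) (αt β t : ℝ) : ℝ :=
  quenchedCav n αt t (fun _ b _ l => Real.log (Zcav n β b l))
    - quenched n αt (fun _ b => Real.log (Zdil n β b))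

/- ## spins -/
lemma spin_cases {n : ℕ} (σ : Conf n) (i : Fin n) : ((σ i : ℝ) = -1 ∨ (σ i : ℝ) = 1) := by
  have h := (σ i).2
  have h2 : (σ i : ℝ) ∈ ({-1, 1} : Finset ℝ) := h
  rcases Finset.mem_insert.1 h2 with h3 | h3
  · exact Or.inl h3
  · exact Or.inr (Finset.mem_singleton.1 h3)

lemma spin_mul_cases {n : ℕ} (σ : Conf n) (i j : Fin n) :
    ((σ i : ℝ) * (σ j : ℝ) = -1 ∨ (σ i : ℝ) * (σ j : ℝ) = 1) := by
  rcases spin_cases σ i with h1 | h1 <;> rcases spin_cases σ j with h2 | h2 <;>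
    simp [h1, h2]

instance confNonempty (n : ℕ) : Nonempty (Conf n) :=
  ⟨fun _ => ⟨1, by simp⟩⟩

lemma card_conf (n : ℕ) : (Fintype.card (Conf n)) = 2 ^ n := by
  rw [Fintype.card_fun, Fintype.card_coe, Fintype.card_fin]
  norm_num

/- ## Z and gibbs -/
lemma Zdil_pos (n : ℕ) (β : ℝ) {k : ℕ} (b : Fin k → Fin n × Fin n) : 0 < Zdil n β b :=
  Finset.sum_pos (fun σ _ => Real.exp_pos _) Finset.univ_nonempty

lemma abs_Hdil_le {n k : ℕ} (b : Fin k → Fin n × Fin n) (σ : Conf n) :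
    |Hdil b σ| ≤ k := by
  rw [Hdil, abs_neg]
  calc |∑ ν : Fin k, (σ (b ν).1 : ℝ) * (σ (b ν).2 : ℝ)|
      ≤ ∑ ν : Fin k, |(σ (b ν).1 : ℝ) * (σ (b ν).2 : ℝ)| := Finset.abs_sum_le_sum_abs _ _
    _ ≤ ∑ _ν : Fin k, 1 := by
        refine Finset.sum_le_sum fun ν _ => ?_
        rcases spin_mul_cases σ (b ν).1 (b ν).2 with h | h <;> simp [h]
    _ = k := by simp

lemma abs_log_Zdil_le (n : ℕ) (β : ℝ) (hβ : 0 ≤ β) {k : ℕ} (b : Fin k → Fin n × Fin n) :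
    |Real.log (Zdil n β b)| ≤ n * Real.log 2 + β * k := by
  have hup : Zdil n β b ≤ 2 ^ n * Real.exp (β * k) := by
    rw [Zdil]
    calc ∑ σ : Conf n, Real.exp (-β * Hdil b σ)
        ≤ ∑ _σ : Conf n, Real.exp (β * k) := by
          refine Finset.sum_le_sum fun σ _ => ?_
          apply Real.exp_le_exp.2
          have h := abs_Hdil_le b σ
          have h1 := abs_le.1 h
          nlinarith [h1.1, h1.2]
      _ = 2 ^ n * Real.exp (β * k) := by
          rw [Finset.sum_const, Finset.card_univ, card_conf, nsmul_eq_mul]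
          push_cast; ring
  have hlo : 2 ^ n * Real.exp (-(β * k)) ≤ Zdil n β b := by
    rw [Zdil]
    calc (2:ℝ) ^ n * Real.exp (-(β * k)) = ∑ _σ : Conf n, Real.exp (-(β * k)) := by
          rw [Finset.sum_const, Finset.card_univ, card_conf, nsmul_eq_mul]
          push_cast; ring
      _ ≤ ∑ σ : Conf n, Real.exp (-β * Hdil b σ) := by
          refine Finset.sum_le_sum fun σ _ => ?_
          apply Real.exp_le_exp.2
          have h1 := abs_le.1 (abs_Hdil_le b σ)
          nlinarith [h1.1, h1.2]
  have h2n : (0:ℝ) < 2 ^ n * Real.exp (-(β * k)) := by positivity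
  have hZ := Zdil_pos n β b
  have hβk : 0 ≤ β * k := by positivity
  have hlog2 : (0:ℝ) ≤ n * Real.log 2 := by
    have : (0:ℝ) ≤ Real.log 2 := Real.log_nonneg (by norm_num)
    positivity
  rw [abs_le]
  constructor
  · have := Real.log_le_log h2n hlo
    rw [Real.log_mul (by positivity) (Real.exp_ne_zero _), Real.log_pow, Real.log_exp] at this
    push_cast at this ⊢
    linarith
  · have := Real.log_le_log hZ hup
    rw [Real.log_mul (by positivity) (Real.exp_ne_zero _), Real.log_pow, Real.log_exp] at this
    push_cast at this ⊢
    linarith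

lemma abs_gibbs_le_one (n : ℕ) (β : ℝ) {k : ℕ} (b : Fin k → Fin n × Fin n)
    {f : Conf n → ℝ} (hf : ∀ σ, |f σ| ≤ 1) : |gibbs n β b f| ≤ 1 := by
  have hZ := Zdil_pos n β b
  rw [gibbs, abs_div, abs_of_pos hZ, div_le_one hZ]
  calc |∑ σ : Conf n, f σ * Real.exp (-β * Hdil b σ)|
      ≤ ∑ σ : Conf n, |f σ * Real.exp (-β * Hdil b σ)| := Finset.abs_sum_le_sum_abs _ _
    _ ≤ ∑ σ : Conf n, Real.exp (-β * Hdil b σ) := by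
        refine Finset.sum_le_sum fun σ _ => ?_
        rw [abs_mul, abs_of_pos (Real.exp_pos _)]
        nlinarith [hf σ, Real.exp_pos (-β * Hdil b σ)]
    _ = Zdil n β b := rfl

/- ## tanh -/
lemma tanh_nonneg {β : ℝ} (hβ : 0 ≤ β) : 0 ≤ Real.tanh β := by
  rw [Real.tanh_eq_sinh_div_cosh]
  have : 0 ≤ Real.sinh β := by
    rw [Real.sinh_eq]; have := Real.exp_le_exp.2 (neg_le_self hβ); linarith
  positivity

lemma tanh_lt_one (β : ℝ) : Real.tanh β < 1 := by
  rw [Real.tanh_eq_sinh_div_cosh, div_lt_one (Real.cosh_pos β)]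
  have := Real.cosh_sub_sinh β
  have := Real.exp_pos (-β)
  linarith

lemma exp_spin (β s : ℝ) (hs : s = -1 ∨ s = 1) :
    Real.exp (β * s) = Real.cosh β * (1 + Real.tanh β * s) := by
  have hc := (Real.cosh_pos β).ne'
  rcases hs with h | h <;> subst h
  · have h1 := Real.cosh_sub_sinh β
    rw [Real.tanh_eq_sinh_div_cosh]
    rw [show β * (-1:ℝ) = -β by ring, ← h1]
    field_simp
    linarith
  · have h1 := Real.cosh_add_sinh β
    rw [Real.tanh_eq_sinh_div_cosh]
    rw [mul_one, ← h1]
    field_simp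

lemma one_add_tanh_gibbs_pos (n : ℕ) (β : ℝ) {k : ℕ} (b : Fin k → Fin n × Fin n)
    {f : Conf n → ℝ} (hf : ∀ σ, |f σ| ≤ 1) (hβ : 0 ≤ β) :
    0 < 1 + Real.tanh β * gibbs n β b f := by
  have h1 := abs_gibbs_le_one n β b hf
  have h2 := tanh_lt_one β
  have h3 := tanh_nonneg hβ
  have h4 := abs_le.1 h1
  nlinarith [h4.1, h4.2]
/- ## bond lemma -/
lemma Zdil_cons (n : ℕ) (β : ℝ) {k : ℕ} (p : Fin n × Fin n) (b : Fin k → Fin n × Fin n) :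
    Zdil n β (Fin.cons p b) = Real.cosh β * Zdil n β b *
      (1 + Real.tanh β * gibbs n β b (fun σ => (σ p.1 : ℝ) * (σ p.2 : ℝ))) := by
  have hZ := (Zdil_pos n β b).ne'
  have key : ∀ σ : Conf n, Real.exp (-β * Hdil (Fin.cons p b) σ)
      = Real.cosh β * ((1 + Real.tanh β * ((σ p.1 : ℝ) * (σ p.2 : ℝ)))
          * Real.exp (-β * Hdil b σ)) := by
    intro σ
    have hH : Hdil (Fin.cons p b) σ = -((σ p.1 : ℝ) * (σ p.2 : ℝ)) + Hdil b σ := by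
      simp [Hdil, Fin.sum_univ_succ]
      ring
    rw [hH, show -β * (-((σ p.1 : ℝ) * (σ p.2 : ℝ)) + Hdil b σ)
        = β * ((σ p.1 : ℝ) * (σ p.2 : ℝ)) + (-β * Hdil b σ) by ring,
      Real.exp_add, exp_spin β _ (spin_mul_cases σ p.1 p.2)]
    ring
  rw [show Zdil n β (Fin.cons p b) = ∑ σ : Conf n, Real.exp (-β * Hdil (Fin.cons p b) σ) from rfl]
  simp_rw [key]
  rw [← Finset.mul_sum, mul_assoc]
  congr 1
  refine Eq.symm ?_
  have hg : gibbs n β b (fun σ => (σ p.1 : ℝ) * (σ p.2 : ℝ)) * Zdil n β b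
      = ∑ σ : Conf n, ((σ p.1 : ℝ) * (σ p.2 : ℝ)) * Real.exp (-β * Hdil b σ) := by
    rw [gibbs, div_mul_cancel₀ _ hZ]
  calc Zdil n β b * (1 + Real.tanh β * gibbs n β b (fun σ => (σ p.1 : ℝ) * (σ p.2 : ℝ)))
      = Zdil n β b + Real.tanh β *
          (gibbs n β b (fun σ => (σ p.1 : ℝ) * (σ p.2 : ℝ)) * Zdil n β b) := by ring
    _ = ∑ σ : Conf n, (1 + Real.tanh β * ((σ p.1 : ℝ) * (σ p.2 : ℝ)))
          * Real.exp (-β * Hdil b σ) := by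
        rw [hg, Zdil, Finset.mul_sum, ← Finset.sum_add_distrib]
        exact Finset.sum_congr rfl fun σ _ => by ring

lemma log_Zdil_cons (n : ℕ) (β : ℝ) (hβ : 0 ≤ β) {k : ℕ} (p : Fin n × Fin n)
    (b : Fin k → Fin n × Fin n) :
    Real.log (Zdil n β (Fin.cons p b)) = Real.log (Real.cosh β) + Real.log (Zdil n β b)
      + Real.log (1 + Real.tanh β * gibbs n β b (fun σ => (σ p.1 : ℝ) * (σ p.2 : ℝ))) := by
  have h1 : ∀ σ : Conf n, |(σ p.1 : ℝ) * (σ p.2 : ℝ)| ≤ 1 := fun σ => by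
    rcases spin_mul_cases σ p.1 p.2 with h | h <;> simp [h]
  have hpos := one_add_tanh_gibbs_pos n β b h1 hβ
  rw [Zdil_cons n β p b,
    Real.log_mul (mul_pos (Real.cosh_pos β) (Zdil_pos n β b)).ne' hpos.ne',
    Real.log_mul (Real.cosh_pos β).ne' (Zdil_pos n β b).ne']

lemma sum_log_Zdil_succ (n : ℕ) (β : ℝ) (hβ : 0 ≤ β) (k : ℕ) :
    ∑ b' : Fin (k+1) → Fin n × Fin n, Real.log (Zdil n β b')
    = ∑ b : Fin k → Fin n × Fin n,
        ((n:ℝ)^2 * Real.log (Real.cosh β) + (n:ℝ)^2 * Real.log (Zdil n β b)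
          + ∑ i : Fin n, ∑ j : Fin n,
              Real.log (1 + Real.tanh β * gibbs n β b (fun σ => (σ i : ℝ) * (σ j : ℝ)))) := by
  rw [← Equiv.sum_comp (Fin.consEquiv fun _ : Fin (k+1) => Fin n × Fin n)
      (fun b' => Real.log (Zdil n β b'))]
  simp only [Fin.consEquiv, Equiv.coe_fn_mk]
  rw [Fintype.sum_prod_type]
  rw [Finset.sum_comm]
  refine Finset.sum_congr rfl fun b _ => ?_
  simp_rw [log_Zdil_cons n β hβ _ b]
  rw [Finset.sum_add_distrib, Finset.sum_add_distrib, Finset.sum_const, Finset.sum_const,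
    Finset.card_univ, Fintype.card_prod, Fintype.card_fin, nsmul_eq_mul, nsmul_eq_mul]
  rw [Fintype.sum_prod_type]
  push_cast
  ring
/- ## summability helpers -/
lemma summable_linear (M C D : ℝ) (hM : 0 ≤ M) :
    Summable (fun k : ℕ => (C + D * k) * M ^ k / (Nat.factorial k : ℝ)) := by
  refine Summable.of_norm_bounded (g :=
    (fun k : ℕ => |C| * (M ^ k / (Nat.factorial k : ℝ))
      + |D| * ((2*M) ^ k / (Nat.factorial k : ℝ))))
    (((Real.summable_pow_div_factorial M).mul_left _).add
      ((Real.summable_pow_div_factorial (2*M)).mul_left _)) (fun k => ?_)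
  have hfac : (0:ℝ) < (Nat.factorial k : ℝ) := by positivity
  have h2 : (k:ℝ) ≤ 2 ^ k := by
    exact_mod_cast (Nat.lt_two_pow_self (n := k)).le
  have hMk : (0:ℝ) ≤ M ^ k := by positivity
  rw [Real.norm_eq_abs, abs_div, abs_of_pos hfac, abs_mul, abs_of_nonneg hMk]
  have habs : |C + D * k| ≤ |C| + |D| * k := by
    calc |C + D * k| ≤ |C| + |D * k| := abs_add_le _ _
      _ = |C| + |D| * k := by rw [abs_mul, Nat.abs_cast]
  have key : |C + D * k| * M ^ k ≤ |C| * M ^ k + |D| * (2*M) ^ k := by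
    have h3 : |D| * (k:ℝ) * M ^ k ≤ |D| * (2*M) ^ k := by
      rw [mul_pow, ← mul_assoc]
      exact mul_le_mul_of_nonneg_right
        (mul_le_mul_of_nonneg_left h2 (abs_nonneg D)) hMk
    nlinarith [abs_nonneg C, abs_nonneg D, mul_le_mul_of_nonneg_right habs hMk]
  calc |C + D * k| * M ^ k / (Nat.factorial k : ℝ)
      ≤ (|C| * M ^ k + |D| * (2*M) ^ k) / (Nat.factorial k : ℝ) := by
        gcongr
    _ = |C| * (M ^ k / (Nat.factorial k : ℝ)) + |D| * ((2*M) ^ k / (Nat.factorial k : ℝ)) := by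
        ring

lemma hasSum_poissonPMF (l : ℝ) : HasSum (poissonPMF l) 1 := by
  have hs : HasSum (fun k : ℕ => l ^ k / (Nat.factorial k : ℝ)) (Real.exp l) := by
    have h := (Real.summable_pow_div_factorial l).hasSum
    have he : ∑' k : ℕ, l ^ k / (Nat.factorial k : ℝ) = Real.exp l := by
      rw [Real.exp_eq_exp_ℝ, NormedSpace.exp_eq_tsum_div]
    rwa [he] at h
  have h2 := hs.mul_left (Real.exp (-l))
  have h3 : Real.exp (-l) * Real.exp l = 1 := by rw [← Real.exp_add]; simp
  rw [h3] at h2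
  refine h2.congr_fun fun k => ?_
  rw [poissonPMF, mul_div_assoc]

lemma poissonPMF_nonneg {l : ℝ} (hl : 0 ≤ l) (k : ℕ) : 0 ≤ poissonPMF l k := by
  rw [poissonPMF]; positivity

lemma poissonPMF_le {l M : ℝ} (hl : 0 ≤ l) (hlM : l ≤ M) (k : ℕ) :
    poissonPMF l k ≤ M ^ k / (Nat.factorial k : ℝ) := by
  rw [poissonPMF]
  have h1 : Real.exp (-l) ≤ 1 := by
    rw [show (1:ℝ) = Real.exp 0 by simp]
    exact Real.exp_le_exp.2 (by linarith)
  have h2 : l ^ k ≤ M ^ k := pow_le_pow_left₀ hl hlM k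
  have hfac : (0:ℝ) < (Nat.factorial k : ℝ) := by positivity
  rw [div_le_div_iff_of_pos_right hfac]
  have := Real.exp_pos (-l)
  nlinarith [pow_nonneg hl k]

lemma card_bonds (n k : ℕ) :
    ((Fintype.card (Fin k → Fin n × Fin n) : ℝ)) = ((n:ℝ)^2)^k := by
  rw [Fintype.card_fun, Fintype.card_prod, Fintype.card_fin, Fintype.card_fin]
  push_cast
  ring

lemma abs_avg_le {n k : ℕ} (hn : 1 ≤ n) (F : (Fin k → Fin n × Fin n) → ℝ) (C : ℝ)
    (h : ∀ b, |F b| ≤ C) :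
    |(∑ b : Fin k → Fin n × Fin n, F b) / ((n:ℝ)^2)^k| ≤ C := by
  have hn' : (0:ℝ) < (n:ℝ) := by exact_mod_cast hn
  have hden : (0:ℝ) < ((n:ℝ)^2)^k := by positivity
  rw [abs_div, abs_of_pos hden, div_le_iff₀ hden]
  calc |∑ b : Fin k → Fin n × Fin n, F b|
      ≤ ∑ b : Fin k → Fin n × Fin n, |F b| := Finset.abs_sum_le_sum_abs _ _
    _ ≤ ∑ _b : Fin k → Fin n × Fin n, C := Finset.sum_le_sum fun b _ => h b
    _ = C * ((n:ℝ)^2)^k := by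
        rw [Finset.sum_const, Finset.card_univ, nsmul_eq_mul, card_bonds]
        ring

lemma bound_nonneg {n k : ℕ} (hn : 1 ≤ n) (F : (Fin k → Fin n × Fin n) → ℝ) (C : ℝ)
    (h : ∀ b, |F b| ≤ C) : 0 ≤ C := by
  have : Nonempty (Fin n × Fin n) := by
    have : 0 < n := hn
    exact ⟨(⟨0, this⟩, ⟨0, this⟩)⟩
  obtain ⟨b⟩ : Nonempty (Fin k → Fin n × Fin n) := ⟨fun _ => Classical.arbitrary _⟩
  exact (abs_nonneg _).trans (h b)

lemma summable_quenched_term {n : ℕ} (hn : 1 ≤ n) {α : ℝ} (hl : 0 ≤ α * n)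
    (F : (k : ℕ) → (Fin k → Fin n × Fin n) → ℝ) (C D : ℝ)
    (h : ∀ k b, |F k b| ≤ C + D * k) :
    Summable (fun k : ℕ => poissonPMF (α * n) k *
      ((∑ b : Fin k → Fin n × Fin n, F k b) / ((n:ℝ)^2)^k)) := by
  refine Summable.of_norm_bounded (g :=
    (fun k : ℕ => (C + D * k) * (α * n) ^ k / (Nat.factorial k : ℝ)))
    (summable_linear _ C D hl) (fun k => ?_)
  have hCD : 0 ≤ C + D * k := bound_nonneg hn (F k) _ (h k)
  have hp := poissonPMF_nonneg hl k
  have havg := abs_avg_le hn (F k) (C + D * k) (h k)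
  rw [Real.norm_eq_abs, abs_mul, abs_of_nonneg hp]
  calc poissonPMF (α * n) k * |(∑ b : Fin k → Fin n × Fin n, F k b) / ((n:ℝ)^2)^k|
      ≤ ((α * n) ^ k / (Nat.factorial k : ℝ)) * (C + D * k) :=
        mul_le_mul (poissonPMF_le hl le_rfl k) havg (abs_nonneg _) (by positivity)
    _ = (C + D * k) * (α * n) ^ k / (Nat.factorial k : ℝ) := by ring

lemma abs_quenched_le {n : ℕ} (hn : 1 ≤ n) {α : ℝ} (hl : 0 ≤ α * n)
    (F : (k : ℕ) → (Fin k → Fin n × Fin n) → ℝ) (C : ℝ)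
    (h : ∀ k b, |F k b| ≤ C) : |quenched n α F| ≤ C := by
  rw [quenched, ← Real.norm_eq_abs]
  have hg := (hasSum_poissonPMF (α * n)).mul_right C
  have hb : ∀ k : ℕ, ‖poissonPMF (α * n) k *
      ((∑ b : Fin k → Fin n × Fin n, F k b) / ((n:ℝ)^2)^k)‖ ≤ poissonPMF (α * n) k * C := by
    intro k
    rw [Real.norm_eq_abs, abs_mul, abs_of_nonneg (poissonPMF_nonneg hl k)]
    exact mul_le_mul_of_nonneg_left (abs_avg_le hn (F k) C (h k)) (poissonPMF_nonneg hl k)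
  have := tsum_of_norm_bounded hg hb
  simpa using this
/- ## derivative of the Poisson weight -/
lemma hasDerivAt_poissonPMF (n : ℕ) (k : ℕ) (x : ℝ) :
    HasDerivAt (fun a : ℝ => poissonPMF (a * n) k)
      ((n:ℝ) * ((if k = 0 then 0 else poissonPMF (x * n) (k - 1)) - poissonPMF (x * n) k)) x := by
  have hmul : HasDerivAt (fun a : ℝ => a * (n:ℝ)) (n:ℝ) x := hasDerivAt_mul_const _
  set y := x * (n:ℝ) with hy
  have h1 : HasDerivAt (fun y : ℝ => Real.exp (-y)) (Real.exp (-y) * (-1)) y :=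
    ((hasDerivAt_id y).neg).exp
  have h2 : HasDerivAt (fun y : ℝ => y ^ k) ((k:ℝ) * y ^ (k-1)) y := hasDerivAt_pow k y
  have hcore : HasDerivAt (fun y : ℝ => Real.exp (-y) * y ^ k / (Nat.factorial k : ℝ)) _ y :=
    (h1.mul h2).div_const (Nat.factorial k : ℝ)
  have hcomp := HasDerivAt.comp x hcore hmul
  have hfun : ((fun y : ℝ => Real.exp (-y) * y ^ k / (Nat.factorial k : ℝ))
      ∘ (fun a : ℝ => a * (n:ℝ))) = (fun a : ℝ => poissonPMF (a * n) k) := by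
    funext a
    simp [Function.comp, poissonPMF]
  rw [hfun] at hcomp
  refine hcomp.congr_deriv ?_
  symm
  cases k with
  | zero =>
    simp [poissonPMF]
    ring
  | succ m =>
    have hfac : ((m+1).factorial : ℝ) ≠ 0 := by positivity
    have hfacm : ((m).factorial : ℝ) ≠ 0 := by positivity
    simp only [poissonPMF, Nat.succ_ne_zero, if_false, Nat.succ_sub_one]
    rw [Nat.factorial_succ]
    push_cast
    field_simp
    ring

/- ## elementary log bound -/
lemma abs_log_one_add_le {θ x : ℝ} (hθ0 : 0 ≤ θ) (hθ1 : θ < 1) (hx : |x| ≤ 1) :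
    |Real.log (1 + θ * x)| ≤ |Real.log (1 - θ)| + |Real.log (1 + θ)| := by
  have hx' := abs_le.1 hx
  have hpos : 0 < 1 + θ * x := by nlinarith [hx'.1, hx'.2]
  have h1θ : 0 < 1 - θ := by linarith
  have hlo : Real.log (1 - θ) ≤ Real.log (1 + θ * x) :=
    Real.log_le_log h1θ (by nlinarith [hx'.1])
  have hhi : Real.log (1 + θ * x) ≤ Real.log (1 + θ) :=
    Real.log_le_log hpos (by nlinarith [hx'.2])
  rw [abs_le]
  constructor
  · have := neg_abs_le (Real.log (1 - θ))
    have h2 := abs_nonneg (Real.log (1 + θ))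
    linarith
  · have := le_abs_self (Real.log (1 + θ))
    have h2 := abs_nonneg (Real.log (1 - θ))
    linarith
/- ## the derivative of the quenched pressure -/
set_option maxHeartbeats 2000000 in
lemma hasDerivAt_quenched_log (N : ℕ) (hN : 1 ≤ N) (β : ℝ) (hβ : 0 ≤ β) (α : ℝ)
    (hα : 1 / 2 < α) :
    HasDerivAt (fun α' : ℝ => quenched N α' (fun _ b => Real.log (Zdil N β b)))
      ((N:ℝ) * (Real.log (Real.cosh β) + quenched N α (fun _ b =>
        (1 / (N : ℝ) ^ 2) * ∑ i : Fin N, ∑ j : Fin N,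
          Real.log (1 + Real.tanh β * gibbs N β b (fun σ => (σ i : ℝ) * (σ j : ℝ)))))) α := by
  have hN0 : (0:ℝ) < N := by exact_mod_cast hN
  have hl : 0 ≤ α * N := by nlinarith
  set A := (N:ℝ) * Real.log 2 with hA
  have hA0 : 0 ≤ A := mul_nonneg hN0.le (Real.log_nonneg one_le_two)
  set c : ℕ → ℝ := fun k =>
    (∑ b : Fin k → Fin N × Fin N, Real.log (Zdil N β b)) / ((N:ℝ)^2)^k with hc
  have hcb : ∀ k, |c k| ≤ A + β * k := fun k =>
    abs_avg_le hN _ _ (fun b => abs_log_Zdil_le N β hβ b)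
  set M := (α + 1) * N with hM
  have hM0 : 0 ≤ M := by nlinarith
  set g' : ℕ → ℝ → ℝ := fun k a =>
    ((N:ℝ) * ((if k = 0 then 0 else poissonPMF (a * N) (k - 1)) - poissonPMF (a * N) k)) * c k
    with hg'def
  set u : ℕ → ℝ := fun k =>
    (N:ℝ) * ((A + β + β * ((k-1 : ℕ) : ℝ)) * M^(k-1) / (Nat.factorial (k-1) : ℝ)
      + (A + β * k) * M^k / (Nat.factorial k : ℝ)) with hu_def
  have hu : Summable u := by
    apply Summable.mul_left
    apply Summable.add
    · apply (summable_nat_add_iff 1).1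
      have he : (fun k : ℕ => (A + β + β * (((k+1)-1 : ℕ) : ℝ)) * M^((k+1)-1)
          / (Nat.factorial ((k+1)-1) : ℝ))
          = fun k : ℕ => ((A + β) + β * (k : ℝ)) * M^k / (Nat.factorial k : ℝ) := by
        funext k; simp
      exact he ▸ summable_linear M (A+β) β hM0
    · exact summable_linear M A β hM0
  have hg : ∀ (k : ℕ), ∀ y ∈ Set.Ioo (0:ℝ) (α+1),
      HasDerivAt (fun a => poissonPMF (a * N) k * c k) (g' k y) y :=
    fun k y _ => (hasDerivAt_poissonPMF N k y).mul_const (c k)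
  have hbd : ∀ (k : ℕ), ∀ y ∈ Set.Ioo (0:ℝ) (α+1), ‖g' k y‖ ≤ u k := by
    intro k y hy
    have hy0 : 0 ≤ y * N := by nlinarith [hy.1]
    have hyM : y * N ≤ M := by nlinarith [hy.2]
    have hQ2 := poissonPMF_le hy0 hyM k
    have hP2 := poissonPMF_nonneg hy0 k
    have hck := hcb k
    have hck0 : 0 ≤ A + β * k := le_trans (abs_nonneg _) hck
    have hfac1 : (0:ℝ) < (Nat.factorial (k-1) : ℝ) := by positivity
    have hfack : (0:ℝ) < (Nat.factorial k : ℝ) := by positivity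
    have hS : 0 ≤ (if k = 0 then (0:ℝ) else poissonPMF (y * N) (k - 1)) ∧
        (if k = 0 then (0:ℝ) else poissonPMF (y * N) (k - 1))
          ≤ M^(k-1) / (Nat.factorial (k-1) : ℝ) := by
      cases k with
      | zero =>
        constructor
        · simp
        · have h0 : (0:ℝ) ≤ M ^ (0-1) / (Nat.factorial (0-1) : ℝ) := by positivity
          simpa using h0
      | succ m =>
        simp only [Nat.succ_ne_zero, if_false, Nat.succ_sub_one]
        exact ⟨poissonPMF_nonneg hy0 m, poissonPMF_le hy0 hyM m⟩
    have hcoef : A + β * k ≤ A + β + β * ((k-1 : ℕ) : ℝ) := by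
      cases k with
      | zero => simp; linarith
      | succ m => simp [Nat.succ_sub_one]; push_cast; ring_nf; linarith
    have habsdiff : |(if k = 0 then (0:ℝ) else poissonPMF (y * N) (k - 1))
        - poissonPMF (y * N) k|
        ≤ M^(k-1) / (Nat.factorial (k-1) : ℝ) + M^k / (Nat.factorial k : ℝ) := by
      rw [abs_le]
      constructor <;> [skip; skip] <;>
        nlinarith [hS.1, hS.2, hP2, hQ2]
    rw [hg'def]
    simp only [Real.norm_eq_abs]
    rw [abs_mul, abs_mul, Nat.abs_cast]
    have hQ1' : (0:ℝ) ≤ M^(k-1) / (Nat.factorial (k-1) : ℝ) := by positivity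
    have hQ2' : (0:ℝ) ≤ M^k / (Nat.factorial k : ℝ) := by positivity
    calc (N:ℝ) * |(if k = 0 then (0:ℝ) else poissonPMF (y * N) (k - 1)) - poissonPMF (y * N) k|
          * |c k|
        ≤ (N:ℝ) * ((M^(k-1) / (Nat.factorial (k-1) : ℝ) + M^k / (Nat.factorial k : ℝ))
          * (A + β * k)) := by
          rw [mul_assoc]
          apply mul_le_mul_of_nonneg_left _ hN0.le
          exact mul_le_mul habsdiff hck (abs_nonneg _) (by positivity)
      _ ≤ u k := by
          simp only [hu_def]
          have h1 : (M^(k-1) / (Nat.factorial (k-1) : ℝ)) * (A + β * k)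
              ≤ (A + β + β * ((k-1 : ℕ) : ℝ)) * M^(k-1) / (Nat.factorial (k-1) : ℝ) := by
            rw [div_mul_eq_mul_div, div_le_div_iff_of_pos_right hfac1]
            nlinarith [hcoef, pow_nonneg hM0 (k-1)]
          have h2 : (M^k / (Nat.factorial k : ℝ)) * (A + β * k)
              = (A + β * k) * M^k / (Nat.factorial k : ℝ) := by ring
          apply mul_le_mul_of_nonneg_left _ hN0.le
          nlinarith [h1]
  have hmem : α ∈ Set.Ioo (0:ℝ) (α+1) := ⟨by linarith, by linarith⟩
  have hg0 : Summable (fun k : ℕ => poissonPMF (α * N) k * c k) := by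
    have := summable_quenched_term hN hl (fun _ b => Real.log (Zdil N β b)) A β
      (fun k b => abs_log_Zdil_le N β hβ b)
    exact this
  have hderiv : HasDerivAt (fun z : ℝ => ∑' k : ℕ, poissonPMF (z * N) k * c k)
      (∑' k : ℕ, g' k α) α :=
    hasDerivAt_tsum_of_isPreconnected hu isOpen_Ioo (convex_Ioo 0 (α+1)).isPreconnected
      hg hbd hmem hg0 hmem
  have hfun : (fun α' : ℝ => quenched N α' (fun _ b => Real.log (Zdil N β b)))
      = fun z : ℝ => ∑' k : ℕ, poissonPMF (z * N) k * c k := by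
    funext z
    rw [quenched]
  rw [hfun]
  -- now compute the sum of the derivatives
  convert hderiv using 1
  -- goal: N * (logcosh + quenched ...) = ∑' k, g' k α
  have hθ0 := tanh_nonneg hβ
  have hθ1 := tanh_lt_one β
  set LC := Real.log (Real.cosh β) with hLC
  set Cg := |Real.log (1 - Real.tanh β)| + |Real.log (1 + Real.tanh β)| with hCg
  set G2 : (k : ℕ) → (Fin k → Fin N × Fin N) → ℝ := fun _ b =>
    (1 / (N : ℝ) ^ 2) * ∑ i : Fin N, ∑ j : Fin N,
      Real.log (1 + Real.tanh β * gibbs N β b (fun σ => (σ i : ℝ) * (σ j : ℝ))) with hG2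
  have hG2bd : ∀ (k : ℕ) (b : Fin k → Fin N × Fin N), |G2 k b| ≤ Cg + 0 * k := by
    intro k b
    have hterm : ∀ i j : Fin N,
        |Real.log (1 + Real.tanh β * gibbs N β b (fun σ => (σ i : ℝ) * (σ j : ℝ)))| ≤ Cg := by
      intro i j
      exact abs_log_one_add_le hθ0 hθ1 (abs_gibbs_le_one N β b (fun σ => by
        rcases spin_mul_cases σ i j with h | h <;> simp [h]))
    have hCg0 : 0 ≤ Cg := by rw [hCg]; positivity
    rw [hG2]
    simp only [zero_mul, add_zero]
    rw [abs_mul]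
    have hsum : |∑ i : Fin N, ∑ j : Fin N,
        Real.log (1 + Real.tanh β * gibbs N β b (fun σ => (σ i : ℝ) * (σ j : ℝ)))|
        ≤ (N:ℝ)^2 * Cg := by
      calc |∑ i : Fin N, ∑ j : Fin N, Real.log (1 + Real.tanh β *
            gibbs N β b (fun σ => (σ i : ℝ) * (σ j : ℝ)))|
          ≤ ∑ i : Fin N, |∑ j : Fin N, Real.log (1 + Real.tanh β *
            gibbs N β b (fun σ => (σ i : ℝ) * (σ j : ℝ)))| := Finset.abs_sum_le_sum_abs _ _
        _ ≤ ∑ _i : Fin N, (N:ℝ) * Cg := by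
            refine Finset.sum_le_sum fun i _ => ?_
            calc |∑ j : Fin N, Real.log (1 + Real.tanh β *
                  gibbs N β b (fun σ => (σ i : ℝ) * (σ j : ℝ)))|
                ≤ ∑ j : Fin N, |Real.log (1 + Real.tanh β *
                  gibbs N β b (fun σ => (σ i : ℝ) * (σ j : ℝ)))| := Finset.abs_sum_le_sum_abs _ _
              _ ≤ ∑ _j : Fin N, Cg := Finset.sum_le_sum fun j _ => hterm i j
              _ = (N:ℝ) * Cg := by
                  rw [Finset.sum_const, Finset.card_univ, Fintype.card_fin, nsmul_eq_mul]
        _ = (N:ℝ)^2 * Cg := by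
            rw [Finset.sum_const, Finset.card_univ, Fintype.card_fin, nsmul_eq_mul]
            ring
    calc |1 / (N:ℝ)^2| * |∑ i : Fin N, ∑ j : Fin N, Real.log (1 + Real.tanh β *
          gibbs N β b (fun σ => (σ i : ℝ) * (σ j : ℝ)))|
        ≤ |1 / (N:ℝ)^2| * ((N:ℝ)^2 * Cg) := mul_le_mul_of_nonneg_left hsum (abs_nonneg _)
      _ = Cg := by
          rw [abs_of_pos (by positivity : (0:ℝ) < 1 / (N:ℝ)^2)]
          field_simp
  -- summabilities at the point α
  have hqG2 : Summable (fun k : ℕ => poissonPMF (α * N) k *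
      ((∑ b : Fin k → Fin N × Fin N, G2 k b) / ((N:ℝ)^2)^k)) :=
    summable_quenched_term hN hl G2 Cg 0 hG2bd
  have hsum_shift : Summable (fun k : ℕ => poissonPMF (α * N) k * c (k+1)) := by
    refine Summable.of_norm_bounded (g :=
      (fun k : ℕ => ((A + β) + β * k) * (α * N)^k / (Nat.factorial k : ℝ)))
      (summable_linear _ _ _ hl) (fun k => ?_)
    rw [Real.norm_eq_abs, abs_mul, abs_of_nonneg (poissonPMF_nonneg hl k)]
    have hck := hcb (k+1)
    have h2 : |c (k+1)| ≤ (A + β) + β * k := by push_cast at hck ⊢; linarith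
    calc poissonPMF (α * N) k * |c (k+1)|
        ≤ ((α * N)^k / (Nat.factorial k : ℝ)) * ((A + β) + β * k) :=
          mul_le_mul (poissonPMF_le hl le_rfl k) h2 (abs_nonneg _) (by positivity)
      _ = ((A + β) + β * k) * (α * N)^k / (Nat.factorial k : ℝ) := by ring
  set s : ℕ → ℝ := fun k => (if k = 0 then 0 else poissonPMF (α * N) (k-1)) * c k with hs_def
  have hs_succ : ∀ k : ℕ, s (k+1) = poissonPMF (α * N) k * c (k+1) := by
    intro k; rw [hs_def]; simp
  have hs : Summable s := by
    apply (summable_nat_add_iff 1).1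
    exact (funext hs_succ : (fun k : ℕ => s (k+1)) = _) ▸ hsum_shift
  have hts : ∑' k, s k = ∑' k : ℕ, poissonPMF (α * N) k * c (k+1) := by
    rw [Summable.tsum_eq_zero_add hs]
    have hs0 : s 0 = 0 := by rw [hs_def]; simp
    rw [hs0, zero_add]
    exact tsum_congr hs_succ
  -- key recursion
  have hkey : ∀ k : ℕ, c (k+1) = LC + c k +
      (∑ b : Fin k → Fin N × Fin N, G2 k b) / ((N:ℝ)^2)^k := by
    intro k
    have hNsq : ((N:ℝ)^2) ≠ 0 := by positivity
    have hpow : (((N:ℝ)^2)^k) ≠ 0 := by positivity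
    rw [hc]
    simp only []
    rw [sum_log_Zdil_succ N β hβ k]
    rw [Finset.sum_add_distrib, Finset.sum_add_distrib, Finset.sum_const,
      Finset.card_univ, nsmul_eq_mul, card_bonds, ← Finset.mul_sum]
    rw [hG2]
    simp only []
    rw [← Finset.mul_sum, pow_succ]
    field_simp
    ring
  -- assemble
  have hLCsum : Summable (fun k : ℕ => poissonPMF (α * N) k * LC) :=
    ((hasSum_poissonPMF (α * N)).mul_right LC).summable
  have hsplit : ∑' k : ℕ, poissonPMF (α * N) k * c (k+1)
      = LC + ∑' k : ℕ, poissonPMF (α * N) k * c k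
        + ∑' k : ℕ, poissonPMF (α * N) k *
            ((∑ b : Fin k → Fin N × Fin N, G2 k b) / ((N:ℝ)^2)^k) := by
    have he : (fun k : ℕ => poissonPMF (α * N) k * c (k+1))
        = fun k : ℕ => (poissonPMF (α * N) k * LC + poissonPMF (α * N) k * c k)
            + poissonPMF (α * N) k *
              ((∑ b : Fin k → Fin N × Fin N, G2 k b) / ((N:ℝ)^2)^k) := by
      funext k
      rw [hkey k]
      ring
    rw [he, Summable.tsum_add (hLCsum.add hg0) hqG2, Summable.tsum_add hLCsum hg0,
      ((hasSum_poissonPMF (α * N)).mul_right LC).tsum_eq]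
    ring
  have hg'α : ∀ k : ℕ, g' k α = (N:ℝ) * s k - (N:ℝ) * (poissonPMF (α * N) k * c k) := by
    intro k
    rw [hg'def, hs_def]
    ring
  rw [tsum_congr hg'α, Summable.tsum_sub (hs.mul_left _) (hg0.mul_left _),
    tsum_mul_left, tsum_mul_left, hts, hsplit]
  rw [show quenched N α G2 = ∑' k : ℕ, poissonPMF (α * N) k *
      ((∑ b : Fin k → Fin N × Fin N, G2 k b) / ((N:ℝ)^2)^k) from rfl]
  ring
/- ## averaging over sites -/
lemma abs_avg_sites_le {n : ℕ} (hn : 1 ≤ n) (f : Fin n → Fin n → ℝ) (C : ℝ)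
    (h : ∀ i j, |f i j| ≤ C) :
    |(1 / (n:ℝ)^2) * ∑ i : Fin n, ∑ j : Fin n, f i j| ≤ C := by
  have hn0 : (0:ℝ) < n := by exact_mod_cast hn
  have hC : 0 ≤ C := (abs_nonneg _).trans (h ⟨0, hn⟩ ⟨0, hn⟩)
  rw [abs_mul, abs_of_pos (by positivity : (0:ℝ) < 1 / (n:ℝ)^2)]
  have hsum : |∑ i : Fin n, ∑ j : Fin n, f i j| ≤ (n:ℝ)^2 * C := by
    calc |∑ i : Fin n, ∑ j : Fin n, f i j|
        ≤ ∑ i : Fin n, |∑ j : Fin n, f i j| := Finset.abs_sum_le_sum_abs _ _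
      _ ≤ ∑ _i : Fin n, (n:ℝ) * C := by
          refine Finset.sum_le_sum fun i _ => ?_
          calc |∑ j : Fin n, f i j| ≤ ∑ j : Fin n, |f i j| := Finset.abs_sum_le_sum_abs _ _
            _ ≤ ∑ _j : Fin n, C := Finset.sum_le_sum fun j _ => h i j
            _ = (n:ℝ) * C := by
                rw [Finset.sum_const, Finset.card_univ, Fintype.card_fin, nsmul_eq_mul]
      _ = (n:ℝ)^2 * C := by
          rw [Finset.sum_const, Finset.card_univ, Fintype.card_fin, nsmul_eq_mul]; ring
  calc (1 / (n:ℝ)^2) * |∑ i : Fin n, ∑ j : Fin n, f i j|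
      ≤ (1 / (n:ℝ)^2) * ((n:ℝ)^2 * C) := mul_le_mul_of_nonneg_left hsum (by positivity)
    _ = C := by field_simp


set_option maxHeartbeats 2000000 in
/-- **`α`-derivative of the quenched pressure (finite `N`, exact form).** With
`θ = tanh β`, the quenched pressure `A_N(α,β) = (1/N)·E[ln Z_N(α,β)]` is differentiable
in `α > 1/2` with
`∂A_N/∂α = ln cosh β + E[(1/N²) Σ_{i,j} ln(1 + θ·ω(σ_iσ_j))]
        = ln cosh β − Σ_{m≥1} ((-1)^m/m) θ^m ⟨q²_{1,…,m}⟩`,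
where the series converges absolutely and
`⟨q²_{1,…,m}⟩ = E[(1/N²) Σ_{i,j} (ω(σ_iσ_j))^m]` (the series below being indexed by
`m = j + 1`). -/
theorem pressure_hasDerivAt_alpha (N : ℕ) (hN : 1 ≤ N) (β : ℝ) (hβ : 0 ≤ β)
    (θ : ℝ) (hθ : θ = Real.tanh β) (α : ℝ) (hα : 1 / 2 < α)
    (q : ℕ → ℝ)
    (hq : ∀ m : ℕ, q m = quenched N α (fun _ b =>
      (1 / (N : ℝ) ^ 2) * ∑ i : Fin N, ∑ j : Fin N,
        (gibbs N β b (fun σ => (σ i : ℝ) * (σ j : ℝ))) ^ m)) :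
    HasDerivAt (fun α' : ℝ =>
        (1 / (N : ℝ)) * quenched N α' (fun _ b => Real.log (Zdil N β b)))
      (Real.log (Real.cosh β) + quenched N α (fun _ b =>
        (1 / (N : ℝ) ^ 2) * ∑ i : Fin N, ∑ j : Fin N,
          Real.log (1 + θ * gibbs N β b (fun σ => (σ i : ℝ) * (σ j : ℝ)))))
      α ∧
    Summable (fun j : ℕ =>
        |((-1 : ℝ) ^ (j + 1) / ((j : ℝ) + 1)) * θ ^ (j + 1) * q (j + 1)|) ∧
    Real.log (Real.cosh β) + quenched N α (fun _ b =>
        (1 / (N : ℝ) ^ 2) * ∑ i : Fin N, ∑ j : Fin N,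
          Real.log (1 + θ * gibbs N β b (fun σ => (σ i : ℝ) * (σ j : ℝ))))
      = Real.log (Real.cosh β)
        - ∑' j : ℕ, ((-1 : ℝ) ^ (j + 1) / ((j : ℝ) + 1)) * θ ^ (j + 1) * q (j + 1) := by
  subst hθ
  set θ := Real.tanh β with hθ
  have hθ0 : 0 ≤ θ := tanh_nonneg hβ
  have hθ1 : θ < 1 := tanh_lt_one β
  have hN0 : (0:ℝ) < N := by exact_mod_cast hN
  have hl : 0 ≤ α * N := by nlinarith
  -- the gibbs expectations and their bounds
  have hωle : ∀ (k : ℕ) (b : Fin k → Fin N × Fin N) (i j : Fin N),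
      |gibbs N β b (fun σ => (σ i : ℝ) * (σ j : ℝ))| ≤ 1 := fun k b i j =>
    abs_gibbs_le_one N β b (fun σ => by rcases spin_mul_cases σ i j with h | h <;> simp [h])
  -- bound on |q m|
  have hqbd : ∀ m : ℕ, |q m| ≤ 1 := by
    intro m
    rw [hq m]
    refine abs_quenched_le hN hl _ 1 fun k b => ?_
    refine abs_avg_sites_le hN _ 1 fun i j => ?_
    rw [abs_pow]
    exact pow_le_one₀ (abs_nonneg _) (hωle k b i j)
  -- the geometric bound
  have hgeo : Summable (fun j : ℕ => θ ^ (j+1)) := by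
    have h := (summable_geometric_of_lt_one hθ0 hθ1).mul_left θ
    refine h.congr fun j => ?_
    rw [← pow_succ']
  -- coefficient bound
  have hcoef : ∀ j : ℕ, |((-1 : ℝ) ^ (j + 1) / ((j : ℝ) + 1)) * θ ^ (j + 1)| ≤ θ ^ (j+1) := by
    intro j
    have hj1 : (0:ℝ) < (j:ℝ) + 1 := by positivity
    rw [abs_mul, abs_div, abs_pow, abs_neg, abs_one, one_pow, abs_of_pos hj1,
      abs_of_nonneg (pow_nonneg hθ0 _)]
    rw [one_div]
    nlinarith [pow_nonneg hθ0 (j+1), inv_le_one_of_one_le₀ (by linarith : (1:ℝ) ≤ (j:ℝ)+1),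
      inv_nonneg.2 hj1.le]
  -- Part 2 : summability
  have part2 : Summable (fun j : ℕ =>
      |((-1 : ℝ) ^ (j + 1) / ((j : ℝ) + 1)) * θ ^ (j + 1) * q (j + 1)|) := by
    refine Summable.of_nonneg_of_le (fun j => abs_nonneg _) (fun j => ?_) hgeo
    rw [abs_mul]
    calc |((-1 : ℝ) ^ (j + 1) / ((j : ℝ) + 1)) * θ ^ (j + 1)| * |q (j+1)|
        ≤ θ ^ (j+1) * 1 := mul_le_mul (hcoef j) (hqbd (j+1)) (abs_nonneg _)
          (pow_nonneg hθ0 _)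
      _ = θ ^ (j+1) := by ring
  -- Part 1 : the derivative
  have part1 : HasDerivAt (fun α' : ℝ =>
      (1 / (N : ℝ)) * quenched N α' (fun _ b => Real.log (Zdil N β b)))
      (Real.log (Real.cosh β) + quenched N α (fun _ b =>
        (1 / (N : ℝ) ^ 2) * ∑ i : Fin N, ∑ j : Fin N,
          Real.log (1 + θ * gibbs N β b (fun σ => (σ i : ℝ) * (σ j : ℝ))))) α := by
    have h := (hasDerivAt_quenched_log N hN β hβ α hα).const_mul (1 / (N:ℝ))
    have he : (1 / (N:ℝ)) * ((N:ℝ) * (Real.log (Real.cosh β) + quenched N α (fun _ b =>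
        (1 / (N : ℝ) ^ 2) * ∑ i : Fin N, ∑ j : Fin N,
          Real.log (1 + θ * gibbs N β b (fun σ => (σ i : ℝ) * (σ j : ℝ))))))
        = Real.log (Real.cosh β) + quenched N α (fun _ b =>
        (1 / (N : ℝ) ^ 2) * ∑ i : Fin N, ∑ j : Fin N,
          Real.log (1 + θ * gibbs N β b (fun σ => (σ i : ℝ) * (σ j : ℝ)))) := by
      field_simp
    rw [he] at h
    exact h
  refine ⟨part1, part2, ?_⟩
  -- Part 3 : the series identity
  set coefneg : ℕ → ℝ := fun j => -(((-1 : ℝ) ^ (j + 1) / ((j : ℝ) + 1)) * θ ^ (j + 1))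
    with hcoefneg
  set T : ℕ × ℕ → ℝ := fun p => coefneg p.1 * (poissonPMF (α * N) p.2 *
      ((∑ b : Fin p.2 → Fin N × Fin N, (1 / (N : ℝ) ^ 2) * ∑ i : Fin N, ∑ j : Fin N,
        (gibbs N β b (fun σ => (σ i : ℝ) * (σ j : ℝ))) ^ (p.1 + 1)) / ((N:ℝ)^2)^p.2))
    with hT_def
  -- summability of T over ℕ × ℕ
  have hT : Summable T := by
    refine Summable.of_norm_bounded (g := fun p : ℕ × ℕ => θ ^ (p.1 + 1) * poissonPMF (α * N) p.2)
      (Summable.mul_of_nonneg hgeo (hasSum_poissonPMF (α * N)).summable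
        (fun j => pow_nonneg hθ0 _) (fun k => poissonPMF_nonneg hl k)) (fun p => ?_)
    rw [Real.norm_eq_abs, hT_def]
    simp only []
    rw [abs_mul, abs_neg]
    have h2 : |poissonPMF (α * N) p.2 *
        ((∑ b : Fin p.2 → Fin N × Fin N, (1 / (N : ℝ) ^ 2) * ∑ i : Fin N, ∑ j : Fin N,
          (gibbs N β b (fun σ => (σ i : ℝ) * (σ j : ℝ))) ^ (p.1 + 1)) / ((N:ℝ)^2)^p.2)|
        ≤ poissonPMF (α * N) p.2 := by
      rw [abs_mul, abs_of_nonneg (poissonPMF_nonneg hl _)]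
      have havg := abs_avg_le hN (fun b : Fin p.2 → Fin N × Fin N =>
        (1 / (N : ℝ) ^ 2) * ∑ i : Fin N, ∑ j : Fin N,
          (gibbs N β b (fun σ => (σ i : ℝ) * (σ j : ℝ))) ^ (p.1 + 1)) 1 (fun b => by
        refine abs_avg_sites_le hN _ 1 fun i j => ?_
        rw [abs_pow]
        exact pow_le_one₀ (abs_nonneg _) (hωle p.2 b i j))
      nlinarith [poissonPMF_nonneg hl p.2, abs_nonneg ((∑ b : Fin p.2 → Fin N × Fin N,
        (1 / (N : ℝ) ^ 2) * ∑ i : Fin N, ∑ j : Fin N,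
          (gibbs N β b (fun σ => (σ i : ℝ) * (σ j : ℝ))) ^ (p.1 + 1)) / ((N:ℝ)^2)^p.2)]
    calc |(-1 : ℝ) ^ (p.1 + 1) / ((p.1 : ℝ) + 1) * θ ^ (p.1 + 1)| * |poissonPMF (α * N) p.2 *
          ((∑ b : Fin p.2 → Fin N × Fin N, (1 / (N : ℝ) ^ 2) * ∑ i : Fin N, ∑ j : Fin N,
            (gibbs N β b (fun σ => (σ i : ℝ) * (σ j : ℝ))) ^ (p.1 + 1)) / ((N:ℝ)^2)^p.2)|
        ≤ θ ^ (p.1 + 1) * poissonPMF (α * N) p.2 :=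
          mul_le_mul (hcoef p.1) h2 (abs_nonneg _) (pow_nonneg hθ0 _)
      _ = θ ^ (p.1 + 1) * poissonPMF (α * N) p.2 := rfl
  -- row sums : fixed j, sum over k gives coefneg j * q (j+1)
  have hrow : ∀ j : ℕ, HasSum (fun k : ℕ => T (j, k)) (coefneg j * q (j + 1)) := by
    intro j
    have hsum : Summable (fun k : ℕ => poissonPMF (α * N) k *
        ((∑ b : Fin k → Fin N × Fin N, (1 / (N : ℝ) ^ 2) * ∑ i : Fin N, ∑ jj : Fin N,
          (gibbs N β b (fun σ => (σ i : ℝ) * (σ jj : ℝ))) ^ (j + 1)) / ((N:ℝ)^2)^k)) := by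
      refine summable_quenched_term hN hl _ 1 0 fun k b => ?_
      simp only [zero_mul, add_zero]
      refine abs_avg_sites_le hN _ 1 fun i jj => ?_
      rw [abs_pow]
      exact pow_le_one₀ (abs_nonneg _) (hωle k b i jj)
    have hval : q (j + 1) = ∑' k : ℕ, poissonPMF (α * N) k *
        ((∑ b : Fin k → Fin N × Fin N, (1 / (N : ℝ) ^ 2) * ∑ i : Fin N, ∑ jj : Fin N,
          (gibbs N β b (fun σ => (σ i : ℝ) * (σ jj : ℝ))) ^ (j + 1)) / ((N:ℝ)^2)^k) := by
      rw [hq (j+1), quenched]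
    exact (hval ▸ hsum.hasSum).mul_left (coefneg j)
  -- column sums : fixed k, sum over j gives the log expression
  have hcol : ∀ k : ℕ, HasSum (fun j : ℕ => T (j, k))
      (poissonPMF (α * N) k *
        ((∑ b : Fin k → Fin N × Fin N, (1 / (N : ℝ) ^ 2) * ∑ i : Fin N, ∑ jj : Fin N,
          Real.log (1 + θ * gibbs N β b (fun σ => (σ i : ℝ) * (σ jj : ℝ)))) / ((N:ℝ)^2)^k)) := by
    intro k
    have hsite : ∀ (b : Fin k → Fin N × Fin N) (i jj : Fin N),
        HasSum (fun m : ℕ => coefneg m *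
          (gibbs N β b (fun σ => (σ i : ℝ) * (σ jj : ℝ))) ^ (m + 1))
          (Real.log (1 + θ * gibbs N β b (fun σ => (σ i : ℝ) * (σ jj : ℝ)))) := by
      intro b i jj
      set x := gibbs N β b (fun σ => (σ i : ℝ) * (σ jj : ℝ)) with hx
      have hxle := hωle k b i jj
      have habs : |(-(θ * x))| < 1 := by
        rw [abs_neg, abs_mul, abs_of_nonneg hθ0]
        have := abs_le.1 hxle
        nlinarith [abs_nonneg x]
      have h0 := (Real.hasSum_pow_div_log_of_abs_lt_one habs).neg
      have h1 : (1 : ℝ) - (-(θ * x)) = 1 + θ * x := by ring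
      rw [h1, neg_neg] at h0
      refine h0.congr_fun fun m => ?_
      rw [hcoefneg]
      simp only []
      rw [neg_pow (θ * x) (m+1), mul_pow]
      ring
    have hb : ∀ b : Fin k → Fin N × Fin N,
        HasSum (fun m : ℕ => (1 / (N : ℝ) ^ 2) * ∑ i : Fin N, ∑ jj : Fin N,
          coefneg m * (gibbs N β b (fun σ => (σ i : ℝ) * (σ jj : ℝ))) ^ (m + 1))
          ((1 / (N : ℝ) ^ 2) * ∑ i : Fin N, ∑ jj : Fin N,
            Real.log (1 + θ * gibbs N β b (fun σ => (σ i : ℝ) * (σ jj : ℝ)))) := by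
      intro b
      exact (hasSum_sum fun i _ => hasSum_sum fun jj _ => hsite b i jj).mul_left _
    have hB : HasSum (fun m : ℕ => ∑ b : Fin k → Fin N × Fin N,
          (1 / (N : ℝ) ^ 2) * ∑ i : Fin N, ∑ jj : Fin N,
            coefneg m * (gibbs N β b (fun σ => (σ i : ℝ) * (σ jj : ℝ))) ^ (m + 1))
        (∑ b : Fin k → Fin N × Fin N, (1 / (N : ℝ) ^ 2) * ∑ i : Fin N, ∑ jj : Fin N,
          Real.log (1 + θ * gibbs N β b (fun σ => (σ i : ℝ) * (σ jj : ℝ)))) :=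
      hasSum_sum fun b _ => hb b
    have hB2 := (hB.div_const (((N:ℝ)^2)^k)).mul_left (poissonPMF (α * N) k)
    refine hB2.congr_fun fun m => ?_
    rw [hT_def]
    simp only []
    have hpull : ∑ b : Fin k → Fin N × Fin N, (1 / (N : ℝ) ^ 2) * ∑ i : Fin N, ∑ jj : Fin N,
        coefneg m * (gibbs N β b (fun σ => (σ i : ℝ) * (σ jj : ℝ))) ^ (m + 1)
        = coefneg m * ∑ b : Fin k → Fin N × Fin N, (1 / (N : ℝ) ^ 2) *
            ∑ i : Fin N, ∑ jj : Fin N,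
              (gibbs N β b (fun σ => (σ i : ℝ) * (σ jj : ℝ))) ^ (m + 1) := by
      rw [Finset.mul_sum]
      refine Finset.sum_congr rfl fun b _ => ?_
      simp_rw [← Finset.mul_sum]
      ring
    rw [hpull]
    ring
  -- interchange the two sums
  have hinterchange : quenched N α (fun _ b =>
      (1 / (N : ℝ) ^ 2) * ∑ i : Fin N, ∑ j : Fin N,
        Real.log (1 + θ * gibbs N β b (fun σ => (σ i : ℝ) * (σ j : ℝ))))
      = ∑' j : ℕ, coefneg j * q (j + 1) := by
    have h1 : quenched N α (fun _ b =>
        (1 / (N : ℝ) ^ 2) * ∑ i : Fin N, ∑ j : Fin N,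
          Real.log (1 + θ * gibbs N β b (fun σ => (σ i : ℝ) * (σ j : ℝ))))
        = ∑' k : ℕ, ∑' j : ℕ, T (j, k) := by
      rw [quenched]
      exact tsum_congr fun k => ((hcol k).tsum_eq).symm
    have h2 : ∑' k : ℕ, ∑' j : ℕ, T (j, k) = ∑' j : ℕ, ∑' k : ℕ, T (j, k) :=
      Summable.tsum_comm (by exact hT)
    have h3 : ∑' j : ℕ, ∑' k : ℕ, T (j, k) = ∑' j : ℕ, coefneg j * q (j + 1) :=
      tsum_congr fun j => (hrow j).tsum_eq
    rw [h1, h2, h3]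
  rw [hinterchange]
  have h4 : ∑' j : ℕ, coefneg j * q (j + 1)
      = - ∑' j : ℕ, ((-1 : ℝ) ^ (j + 1) / ((j : ℝ) + 1)) * θ ^ (j + 1) * q (j + 1) := by
    rw [← tsum_neg]
    refine tsum_congr fun j => ?_
    rw [hcoefneg]
    ring
  rw [h4]
  ring
end

section
/- Fix N ≥ 1, α > 1/2, and β ≥ 0. For every integer m ≥ 1, the quenched averages of the diluted Curie–Weiss model satisfy ⟨q²_{1,…,m}⟩ ≥ ⟨m²⟩^m, where ⟨q²_{1,…,m}⟩ = E[(1/N²) Σ_{p,q∈Fin N} (ω(σ_pσ_q))^m] and ⟨m²⟩ = E[(1/N²) Σ_{p,q∈Fin N} ω(σ_pσ_q)]. -/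
open scoped BigOperators

namespace OverlapAux

instance confNonempty (n : ℕ) : Nonempty (Conf n) := ⟨fun _ => ⟨1, by simp⟩⟩

lemma spin_cases {n : ℕ} (σ : Conf n) (i : Fin n) : ((σ i : ℝ)) = -1 ∨ ((σ i : ℝ)) = 1 := by
  have h := (σ i).2
  simp only [SpinVal, Finset.mem_insert, Finset.mem_singleton] at h
  exact h

lemma spin_sq {n : ℕ} (σ : Conf n) (i : Fin n) : (σ i : ℝ) * (σ i : ℝ) = 1 := by
  rcases spin_cases σ i with h | h <;> rw [h] <;> norm_num

/-- flip membership of `a` in `T` -/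
def flipIn {n : ℕ} (T : Finset (Fin n)) (a : Fin n) : Finset (Fin n) :=
  if a ∈ T then T.erase a else insert a T

lemma char_mul {n : ℕ} (σ : Conf n) (T : Finset (Fin n)) (a : Fin n) :
    (∏ i ∈ T, (σ i : ℝ)) * (σ a : ℝ) = ∏ i ∈ flipIn T a, (σ i : ℝ) := by
  unfold flipIn
  by_cases h : a ∈ T
  · rw [if_pos h, ← Finset.mul_prod_erase T _ h]
    rw [mul_comm ((σ a : ℝ)) _, mul_assoc, spin_sq, mul_one]
  · rw [if_neg h, Finset.prod_insert h, mul_comm]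

lemma sum_char_nonneg {n : ℕ} (T : Finset (Fin n)) :
    0 ≤ ∑ σ : Conf n, ∏ i ∈ T, (σ i : ℝ) := by
  rcases T.eq_empty_or_nonempty with rfl | ⟨a, ha⟩
  · simp
  · have negmem : ∀ x : SpinVal, -(x : ℝ) ∈ SpinVal := by
      intro x
      have := x.2
      simp only [SpinVal, Finset.mem_insert, Finset.mem_singleton] at this ⊢
      rcases this with h | h <;> simp [h]
    set negSpin : SpinVal → SpinVal := fun x => ⟨-(x : ℝ), negmem x⟩ with hns
    have hinv : Function.Involutive
        (fun σ : Conf n => Function.update σ a (negSpin (σ a))) := by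
      intro σ
      funext i
      by_cases h : i = a
      · subst h
        simp [hns, Function.update_self]
      · simp [Function.update_of_ne h]
    have hneg : ∀ σ : Conf n,
        (∏ i ∈ T, ((Function.update σ a (negSpin (σ a)) i : ℝ))) = -∏ i ∈ T, (σ i : ℝ) := by
      intro σ
      rw [← Finset.mul_prod_erase T _ ha, ← Finset.mul_prod_erase T (fun i => (σ i : ℝ)) ha]
      have h1 : ((Function.update σ a (negSpin (σ a)) a : ℝ)) = -(σ a : ℝ) := by
        simp [hns]
      have h2 : ∀ i ∈ T.erase a,
          ((Function.update σ a (negSpin (σ a)) i : ℝ)) = (σ i : ℝ) := by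
        intro i hi
        rw [Function.update_of_ne (Finset.ne_of_mem_erase hi)]
      rw [h1, Finset.prod_congr rfl h2, neg_mul]
    have key : (∑ σ : Conf n, ∏ i ∈ T, (σ i : ℝ))
        = -∑ σ : Conf n, ∏ i ∈ T, (σ i : ℝ) := by
      conv_lhs => rw [← Equiv.sum_comp hinv.toPerm (fun σ : Conf n => ∏ i ∈ T, (σ i : ℝ))]
      rw [← Finset.sum_neg_distrib]
      exact Finset.sum_congr rfl fun σ _ => hneg σ
    linarith

lemma exp_spin {n : ℕ} {β : ℝ} (σ : Conf n) (x y : Fin n) :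
    Real.exp (β * ((σ x : ℝ) * (σ y : ℝ)))
      = Real.cosh β + ((σ x : ℝ) * (σ y : ℝ)) * Real.sinh β := by
  rcases spin_cases σ x with h | h <;> rcases spin_cases σ y with h' | h' <;>
    rw [h, h'] <;> norm_num [Real.cosh_eq, Real.sinh_eq] <;> ring

lemma key_nonneg {n : ℕ} {β : ℝ} (hβ : 0 ≤ β) :
    ∀ (k : ℕ) (b : Fin k → Fin n × Fin n) (T : Finset (Fin n)),
    0 ≤ ∑ σ : Conf n, (∏ i ∈ T, (σ i : ℝ)) *
        ∏ ν : Fin k, Real.exp (β * ((σ (b ν).1 : ℝ) * (σ (b ν).2 : ℝ))) := by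
  intro k
  induction k with
  | zero => intro b T; simpa using sum_char_nonneg T
  | succ k ih =>
    intro b T
    set a := (b 0).1 with hadef
    set c := (b 0).2 with hcdef
    have step : ∀ σ : Conf n,
        (∏ i ∈ T, (σ i : ℝ)) *
            ∏ ν : Fin (k+1), Real.exp (β * ((σ (b ν).1 : ℝ) * (σ (b ν).2 : ℝ)))
          = Real.cosh β * ((∏ i ∈ T, (σ i : ℝ)) *
              ∏ ν : Fin k, Real.exp (β * ((σ (b ν.succ).1 : ℝ) * (σ (b ν.succ).2 : ℝ))))
            + Real.sinh β * ((∏ i ∈ flipIn (flipIn T a) c, (σ i : ℝ)) *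
              ∏ ν : Fin k, Real.exp (β * ((σ (b ν.succ).1 : ℝ) * (σ (b ν.succ).2 : ℝ)))) := by
      intro σ
      rw [Fin.prod_univ_succ, exp_spin σ a c]
      have h1 : (∏ i ∈ flipIn (flipIn T a) c, (σ i : ℝ))
          = (∏ i ∈ T, (σ i : ℝ)) * ((σ a : ℝ) * (σ c : ℝ)) := by
        rw [← char_mul, ← char_mul]; ring
      rw [h1]; ring
    rw [Finset.sum_congr rfl fun σ _ => step σ, Finset.sum_add_distrib,
      ← Finset.mul_sum, ← Finset.mul_sum]
    exact add_nonneg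
      (mul_nonneg (Real.cosh_pos β).le (ih (fun ν => b ν.succ) T))
      (mul_nonneg (Real.sinh_nonneg_iff.2 hβ) (ih (fun ν => b ν.succ) (flipIn (flipIn T a) c)))

lemma Zdil_pos (n : ℕ) (β : ℝ) {k : ℕ} (b : Fin k → Fin n × Fin n) : 0 < Zdil n β b :=
  Finset.sum_pos (fun σ _ => Real.exp_pos _) Finset.univ_nonempty

lemma exp_ham {n k : ℕ} {β : ℝ} (b : Fin k → Fin n × Fin n) (σ : Conf n) :
    Real.exp (-β * Hdil b σ)
      = ∏ ν : Fin k, Real.exp (β * ((σ (b ν).1 : ℝ) * (σ (b ν).2 : ℝ))) := by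
  rw [← Real.exp_sum, Hdil, ← Finset.mul_sum]
  ring_nf

lemma gibbs_nonneg {n : ℕ} {β : ℝ} (hβ : 0 ≤ β) {k : ℕ} (b : Fin k → Fin n × Fin n)
    (p q : Fin n) : 0 ≤ gibbs n β b (fun σ => (σ p : ℝ) * (σ q : ℝ)) := by
  apply div_nonneg _ (Zdil_pos n β b).le
  have h : ∀ σ : Conf n, ((σ p : ℝ) * (σ q : ℝ)) * Real.exp (-β * Hdil b σ)
      = (∏ i ∈ flipIn (flipIn (∅ : Finset (Fin n)) p) q, (σ i : ℝ)) *
        ∏ ν : Fin k, Real.exp (β * ((σ (b ν).1 : ℝ) * (σ (b ν).2 : ℝ))) := by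
    intro σ
    rw [exp_ham, ← char_mul, ← char_mul]
    simp
  rw [Finset.sum_congr rfl fun σ _ => h σ]
  exact key_nonneg hβ k b _

lemma gibbs_le_one {n : ℕ} (β : ℝ) {k : ℕ} (b : Fin k → Fin n × Fin n)
    (p q : Fin n) : gibbs n β b (fun σ => (σ p : ℝ) * (σ q : ℝ)) ≤ 1 := by
  rw [gibbs, div_le_one (Zdil_pos n β b)]
  apply Finset.sum_le_sum
  intro σ _
  have h1 : (σ p : ℝ) * (σ q : ℝ) ≤ 1 := by
    rcases spin_cases σ p with h | h <;> rcases spin_cases σ q with h' | h' <;>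
      rw [h, h'] <;> norm_num
  calc (σ p : ℝ) * (σ q : ℝ) * Real.exp (-β * Hdil b σ)
      ≤ 1 * Real.exp (-β * Hdil b σ) :=
        mul_le_mul_of_nonneg_right h1 (Real.exp_pos _).le
    _ = Real.exp (-β * Hdil b σ) := one_mul _

lemma pow_tangent {a b : ℝ} (ha : 0 ≤ a) (hb : 0 ≤ b) (m : ℕ) :
    b ^ m + (m : ℝ) * b ^ (m - 1) * (a - b) ≤ a ^ m := by
  rcases Nat.eq_zero_or_pos m with rfl | hm
  · simp
  have hgeom : (∑ i ∈ Finset.range m, a ^ i * b ^ (m - 1 - i)) * (a - b)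
      = a ^ m - b ^ m := geom_sum₂_mul a b m
  have hcard : ((Finset.range m).card : ℝ) = (m : ℝ) := by simp
  have key : (m : ℝ) * b ^ (m - 1) * (a - b)
      ≤ (∑ i ∈ Finset.range m, a ^ i * b ^ (m - 1 - i)) * (a - b) := by
    rcases le_total b a with hab | hab
    · apply mul_le_mul_of_nonneg_right _ (by linarith)
      calc (m : ℝ) * b ^ (m - 1) = ∑ _i ∈ Finset.range m, b ^ (m - 1) := by
            rw [Finset.sum_const, nsmul_eq_mul, hcard]
        _ ≤ ∑ i ∈ Finset.range m, a ^ i * b ^ (m - 1 - i) := by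
            apply Finset.sum_le_sum
            intro i hi
            rw [Finset.mem_range] at hi
            have h1 : b ^ (m - 1) = b ^ i * b ^ (m - 1 - i) := by
              rw [← pow_add]; congr 1; omega
            rw [h1]
            exact mul_le_mul_of_nonneg_right (pow_le_pow_left₀ hb hab i)
              (pow_nonneg hb _)
    · rw [← neg_le_neg_iff, ← mul_neg, ← mul_neg]
      apply mul_le_mul_of_nonneg_right _ (by linarith)
      calc (∑ i ∈ Finset.range m, a ^ i * b ^ (m - 1 - i))
          ≤ ∑ _i ∈ Finset.range m, b ^ (m - 1) := by
            apply Finset.sum_le_sum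
            intro i hi
            rw [Finset.mem_range] at hi
            have h1 : b ^ (m - 1) = b ^ i * b ^ (m - 1 - i) := by
              rw [← pow_add]; congr 1; omega
            rw [h1]
            exact mul_le_mul_of_nonneg_right (pow_le_pow_left₀ ha hab i)
              (pow_nonneg hb _)
        _ = (m : ℝ) * b ^ (m - 1) := by rw [Finset.sum_const, nsmul_eq_mul, hcard]
  linarith [hgeom ▸ key]

lemma tsum_jensen {w x : ℕ → ℝ} (hw : ∀ k, 0 ≤ w k) (hsw : Summable w)
    (hw1 : ∑' k, w k = 1) (hx0 : ∀ k, 0 ≤ x k) (hx1 : ∀ k, x k ≤ 1) (m : ℕ) :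
    (∑' k, w k * x k) ^ m ≤ ∑' k, w k * x k ^ m := by
  set μ := ∑' k, w k * x k with hμdef
  have hsx : Summable fun k => w k * x k :=
    Summable.of_nonneg_of_le (fun k => mul_nonneg (hw k) (hx0 k))
      (fun k => mul_le_of_le_one_right (hw k) (hx1 k)) hsw
  have hsxm : Summable fun k => w k * x k ^ m :=
    Summable.of_nonneg_of_le (fun k => mul_nonneg (hw k) (pow_nonneg (hx0 k) m))
      (fun k => mul_le_of_le_one_right (hw k) (pow_le_one₀ (hx0 k) (hx1 k))) hsw
  have hμ0 : 0 ≤ μ := tsum_nonneg fun k => mul_nonneg (hw k) (hx0 k)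
  set c2 : ℝ := (m : ℝ) * μ ^ (m - 1) with hc2
  set c1 : ℝ := μ ^ m - c2 * μ with hc1
  have hpt : ∀ k, c1 * w k + c2 * (w k * x k) ≤ w k * x k ^ m := by
    intro k
    have ht := pow_tangent (hx0 k) hμ0 m
    calc c1 * w k + c2 * (w k * x k)
        = w k * (μ ^ m + c2 * (x k - μ)) := by ring
      _ ≤ w k * x k ^ m := by
          apply mul_le_mul_of_nonneg_left _ (hw k)
          rw [hc2]
          linarith [ht]
  have hslhs : Summable fun k => c1 * w k + c2 * (w k * x k) :=
    (hsw.mul_left c1).add (hsx.mul_left c2)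
  have hls : ∑' k, (c1 * w k + c2 * (w k * x k)) = μ ^ m := by
    rw [Summable.tsum_add (hsw.mul_left c1) (hsx.mul_left c2), tsum_mul_left, tsum_mul_left,
      hw1, ← hμdef, mul_one, hc1]
    ring
  calc μ ^ m = ∑' k, (c1 * w k + c2 * (w k * x k)) := hls.symm
    _ ≤ ∑' k, w k * x k ^ m := Summable.tsum_le_tsum hpt hslhs hsxm

lemma poisson_nonneg {lam : ℝ} (hl : 0 ≤ lam) (k : ℕ) : 0 ≤ poissonPMF lam k := by
  unfold poissonPMF
  positivity

lemma poisson_summable (lam : ℝ) : Summable (poissonPMF lam) := by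
  have h : poissonPMF lam = fun k => Real.exp (-lam) * (lam ^ k / (Nat.factorial k : ℝ)) := by
    funext k; unfold poissonPMF; ring
  rw [h]
  exact (Real.summable_pow_div_factorial lam).mul_left _

lemma poisson_sum (lam : ℝ) : ∑' k, poissonPMF lam k = 1 := by
  have h : poissonPMF lam = fun k => Real.exp (-lam) * (lam ^ k / (Nat.factorial k : ℝ)) := by
    funext k; unfold poissonPMF; ring
  rw [h, tsum_mul_left]
  rw [show ∑' k : ℕ, lam ^ k / (Nat.factorial k : ℝ) = Real.exp lam by
    rw [Real.exp_eq_exp_ℝ, NormedSpace.exp_eq_tsum_div]]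
  rw [← Real.exp_add]
  simp

lemma avg_pow_le {ι : Type*} [Fintype ι] [Nonempty ι] (z : ι → ℝ) (hz : ∀ i, 0 ≤ z i)
    (m : ℕ) :
    ((∑ i, z i) / (Fintype.card ι : ℝ)) ^ m ≤ (∑ i, z i ^ m) / (Fintype.card ι : ℝ) := by
  have hc : (0 : ℝ) < (Fintype.card ι : ℝ) := by exact_mod_cast Fintype.card_pos
  have hw : ∑ _i : ι, (1 / (Fintype.card ι : ℝ)) = 1 := by
    rw [Finset.sum_const, Finset.card_univ, nsmul_eq_mul]
    field_simp
  have hmain := Real.pow_arith_mean_le_arith_mean_pow Finset.univ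
    (fun _ => 1 / (Fintype.card ι : ℝ)) z (fun i _ => by positivity) hw
    (fun i _ => hz i) m
  calc ((∑ i, z i) / (Fintype.card ι : ℝ)) ^ m
      = (∑ i, (1 / (Fintype.card ι : ℝ)) * z i) ^ m := by
        rw [← Finset.mul_sum, one_div, inv_mul_eq_div]
    _ ≤ ∑ i, (1 / (Fintype.card ι : ℝ)) * z i ^ m := hmain
    _ = (∑ i, z i ^ m) / (Fintype.card ι : ℝ) := by
        rw [← Finset.mul_sum, one_div, inv_mul_eq_div]

end OverlapAux

set_option maxHeartbeats 1000000 in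
/-- **Multi-overlaps dominate powers of the magnetization (quenched form).** For every
`m ≥ 1` the quenched averages of the diluted Curie–Weiss model satisfy
`⟨q²_{1,…,m}⟩ ≥ ⟨m²⟩^m`, where
`⟨q²_{1,…,m}⟩ = E[(1/N²) Σ_{p,q} (ω(σ_pσ_q))^m]` and
`⟨m²⟩ = E[(1/N²) Σ_{p,q} ω(σ_pσ_q)]`. -/
theorem overlap_ge_magnetization_pow (N : ℕ) (hN : 1 ≤ N) (α : ℝ) (hα : 1 / 2 < α)
    (β : ℝ) (hβ : 0 ≤ β) (m : ℕ) (hm : 1 ≤ m) :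
    (quenched N α (fun _ b => (1 / (N : ℝ) ^ 2) * ∑ p : Fin N, ∑ q : Fin N,
        gibbs N β b (fun σ => (σ p : ℝ) * (σ q : ℝ)))) ^ m
      ≤ quenched N α (fun _ b => (1 / (N : ℝ) ^ 2) * ∑ p : Fin N, ∑ q : Fin N,
          (gibbs N β b (fun σ => (σ p : ℝ) * (σ q : ℝ))) ^ m) := by
  classical
  haveI : NeZero N := ⟨by omega⟩
  have hN0 : (0 : ℝ) < (N : ℝ) := by exact_mod_cast hN
  have hN2 : (0 : ℝ) < (N : ℝ) ^ 2 := by positivity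
  have hlam : (0 : ℝ) ≤ α * N := by nlinarith
  set w : ℕ → ℝ := poissonPMF (α * N) with hwdef
  have hw0 : ∀ k, 0 ≤ w k := OverlapAux.poisson_nonneg hlam
  have hsw : Summable w := OverlapAux.poisson_summable _
  have hw1 : ∑' k, w k = 1 := OverlapAux.poisson_sum _
  have hcard2 : ((Fintype.card (Fin N × Fin N) : ℝ)) = (N : ℝ) ^ 2 := by
    simp [Fintype.card_prod]
    ring
  have hcardk : ∀ k : ℕ,
      ((Fintype.card (Fin k → Fin N × Fin N) : ℝ)) = ((N : ℝ) ^ 2) ^ k := by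
    intro k
    simp only [Fintype.card_fun, Fintype.card_prod, Fintype.card_fin]
    push_cast
    ring
  have hG0 : ∀ (k : ℕ) (b : Fin k → Fin N × Fin N) (p q : Fin N),
      0 ≤ gibbs N β b (fun σ => (σ p : ℝ) * (σ q : ℝ)) :=
    fun k b p q => OverlapAux.gibbs_nonneg hβ b p q
  have hG1 : ∀ (k : ℕ) (b : Fin k → Fin N × Fin N) (p q : Fin N),
      gibbs N β b (fun σ => (σ p : ℝ) * (σ q : ℝ)) ≤ 1 :=
    fun k b p q => OverlapAux.gibbs_le_one β b p q
  set A : (k : ℕ) → (Fin k → Fin N × Fin N) → ℝ := fun k b =>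
    (1 / (N : ℝ) ^ 2) * ∑ p : Fin N, ∑ q : Fin N,
      gibbs N β b (fun σ => (σ p : ℝ) * (σ q : ℝ)) with hAdef
  set B : (k : ℕ) → (Fin k → Fin N × Fin N) → ℝ := fun k b =>
    (1 / (N : ℝ) ^ 2) * ∑ p : Fin N, ∑ q : Fin N,
      (gibbs N β b (fun σ => (σ p : ℝ) * (σ q : ℝ))) ^ m with hBdef
  have hArw : ∀ (k : ℕ) (b : Fin k → Fin N × Fin N),
      A k b = (∑ pq : Fin N × Fin N,
        gibbs N β b (fun σ => (σ pq.1 : ℝ) * (σ pq.2 : ℝ))) / (N : ℝ) ^ 2 := by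
    intro k b
    simp only [hAdef, Fintype.sum_prod_type]
    ring
  have hBrw : ∀ (k : ℕ) (b : Fin k → Fin N × Fin N),
      B k b = (∑ pq : Fin N × Fin N,
        (gibbs N β b (fun σ => (σ pq.1 : ℝ) * (σ pq.2 : ℝ))) ^ m) / (N : ℝ) ^ 2 := by
    intro k b
    simp only [hBdef, Fintype.sum_prod_type]
    ring
  have hA0 : ∀ (k : ℕ) (b : Fin k → Fin N × Fin N), 0 ≤ A k b := by
    intro k b
    rw [hArw]
    exact div_nonneg (Finset.sum_nonneg fun pq _ => hG0 k b pq.1 pq.2) hN2.le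
  have hA1 : ∀ (k : ℕ) (b : Fin k → Fin N × Fin N), A k b ≤ 1 := by
    intro k b
    rw [hArw, div_le_one hN2]
    calc (∑ pq : Fin N × Fin N, gibbs N β b (fun σ => (σ pq.1 : ℝ) * (σ pq.2 : ℝ)))
        ≤ ∑ _pq : Fin N × Fin N, (1 : ℝ) :=
          Finset.sum_le_sum fun pq _ => hG1 k b pq.1 pq.2
      _ = (N : ℝ) ^ 2 := by
          rw [Finset.sum_const, Finset.card_univ, nsmul_eq_mul, mul_one, hcard2]
  have hB0 : ∀ (k : ℕ) (b : Fin k → Fin N × Fin N), 0 ≤ B k b := by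
    intro k b
    rw [hBrw]
    exact div_nonneg (Finset.sum_nonneg fun pq _ => pow_nonneg (hG0 k b pq.1 pq.2) m) hN2.le
  have hB1 : ∀ (k : ℕ) (b : Fin k → Fin N × Fin N), B k b ≤ 1 := by
    intro k b
    rw [hBrw, div_le_one hN2]
    calc (∑ pq : Fin N × Fin N, (gibbs N β b (fun σ => (σ pq.1 : ℝ) * (σ pq.2 : ℝ))) ^ m)
        ≤ ∑ _pq : Fin N × Fin N, (1 : ℝ) :=
          Finset.sum_le_sum fun pq _ =>
            pow_le_one₀ (hG0 k b pq.1 pq.2) (hG1 k b pq.1 pq.2)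
      _ = (N : ℝ) ^ 2 := by
          rw [Finset.sum_const, Finset.card_univ, nsmul_eq_mul, mul_one, hcard2]
  have hAB : ∀ (k : ℕ) (b : Fin k → Fin N × Fin N), (A k b) ^ m ≤ B k b := by
    intro k b
    rw [hArw, hBrw, ← hcard2]
    exact OverlapAux.avg_pow_le
      (fun pq : Fin N × Fin N => gibbs N β b (fun σ => (σ pq.1 : ℝ) * (σ pq.2 : ℝ)))
      (fun pq => hG0 k b pq.1 pq.2) m
  have hNk : ∀ k : ℕ, (0 : ℝ) < ((N : ℝ) ^ 2) ^ k := fun k => by positivity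
  -- bounds on the bond-averaged quantities
  have ha0 : ∀ k : ℕ,
      0 ≤ (∑ b : Fin k → Fin N × Fin N, A k b) / ((N : ℝ) ^ 2) ^ k := fun k =>
    div_nonneg (Finset.sum_nonneg fun b _ => hA0 k b) (hNk k).le
  have ha1 : ∀ k : ℕ,
      (∑ b : Fin k → Fin N × Fin N, A k b) / ((N : ℝ) ^ 2) ^ k ≤ 1 := by
    intro k
    rw [div_le_one (hNk k)]
    calc (∑ b : Fin k → Fin N × Fin N, A k b)
        ≤ ∑ _b : Fin k → Fin N × Fin N, (1 : ℝ) :=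
          Finset.sum_le_sum fun b _ => hA1 k b
      _ = ((N : ℝ) ^ 2) ^ k := by
          rw [Finset.sum_const, Finset.card_univ, nsmul_eq_mul, mul_one, hcardk]
  have hbb1 : ∀ k : ℕ,
      (∑ b : Fin k → Fin N × Fin N, B k b) / ((N : ℝ) ^ 2) ^ k ≤ 1 := by
    intro k
    rw [div_le_one (hNk k)]
    calc (∑ b : Fin k → Fin N × Fin N, B k b)
        ≤ ∑ _b : Fin k → Fin N × Fin N, (1 : ℝ) :=
          Finset.sum_le_sum fun b _ => hB1 k b
      _ = ((N : ℝ) ^ 2) ^ k := by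
          rw [Finset.sum_const, Finset.card_univ, nsmul_eq_mul, mul_one, hcardk]
  have hbb0 : ∀ k : ℕ,
      0 ≤ (∑ b : Fin k → Fin N × Fin N, B k b) / ((N : ℝ) ^ 2) ^ k := fun k =>
    div_nonneg (Finset.sum_nonneg fun b _ => hB0 k b) (hNk k).le
  -- middle Jensen (over bond configurations)
  have hstep : ∀ k : ℕ,
      ((∑ b : Fin k → Fin N × Fin N, A k b) / ((N : ℝ) ^ 2) ^ k) ^ m
        ≤ (∑ b : Fin k → Fin N × Fin N, B k b) / ((N : ℝ) ^ 2) ^ k := by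
    intro k
    have h1 : ((∑ b : Fin k → Fin N × Fin N, A k b) / ((N : ℝ) ^ 2) ^ k) ^ m
        ≤ (∑ b : Fin k → Fin N × Fin N, (A k b) ^ m) / ((N : ℝ) ^ 2) ^ k := by
      rw [← hcardk]
      exact OverlapAux.avg_pow_le _ (hA0 k) m
    refine h1.trans ?_
    gcongr with b
    exact hAB k b
  -- outer Jensen (over the Poisson number of bonds)
  show (quenched N α A) ^ m ≤ quenched N α B
  rw [quenched, quenched, ← hwdef]
  have houter := OverlapAux.tsum_jensen (w := w)
    (x := fun k => (∑ b : Fin k → Fin N × Fin N, A k b) / ((N : ℝ) ^ 2) ^ k)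
    hw0 hsw hw1 ha0 ha1 m
  refine houter.trans ?_
  refine Summable.tsum_le_tsum (fun k => mul_le_mul_of_nonneg_left (hstep k) (hw0 k)) ?_ ?_
  · exact Summable.of_nonneg_of_le
      (fun k => mul_nonneg (hw0 k) (pow_nonneg (ha0 k) m))
      (fun k => mul_le_of_le_one_right (hw0 k) (pow_le_one₀ (ha0 k) (ha1 k))) hsw
  · exact Summable.of_nonneg_of_le
      (fun k => mul_nonneg (hw0 k) (hbb0 k))
      (fun k => mul_le_of_le_one_right (hw0 k) (hbb1 k)) hsw
end
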